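/- Let P be a homogeneous polynomial of degree d+1 in the inverse system (I_n^arc)^⊥ of the arc ideal of the double point, over a field k of characteristic zero. Then for any scalars ξ_1,...,ξ_d ∈ k and vectors α_1,...,α_d ∈ k^n, substituting the tuple of power series Σ_{m=1}^d α_m e^{ξ_m t} (with e^{ξt} = Σ_j ξ^j t^j / j! ∈ k[[t]]) for x (and its termwise derivatives for the derivative variables) annihilates P: P(α_1 e^{ξ_1 t} + ... + α_d e^{ξ_d t}) = 0. -/

import Mathlib

open MvPolynomial

noncomputable section

open Classical in
/-- Apply the constant-coefficient differential operator `f(∂)` to `P`. -/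
def diffApply {k σ : Type*} [CommSemiring k] (f P : MvPolynomial σ k) :
    MvPolynomial σ k :=
  ∑ d ∈ f.support, ∑ e ∈ P.support,
    if d ≤ e then
      monomial (e - d)
        (f.coeff d * P.coeff e * ∏ i ∈ d.support, ((e i).descFactorial (d i) : k))
    else 0

/-- The ideal of the arc scheme of the double point in `n` variables:
generated by the coefficients of `t^ℓ` in `x_i(t) * x_j(t)`. -/
def arcIdeal (k : Type*) [CommSemiring k] (n : ℕ) : Ideal (MvPolynomial (Fin n × ℕ) k) :=
  Ideal.span { g | ∃ (i j : Fin n) (l : ℕ),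
    g = ∑ s ∈ Finset.range (l + 1), X (i, s) * X (j, l - s) }

/-- The Macaulay inverse system of the arc ideal. -/
def invSys (k : Type*) [CommSemiring k] (n : ℕ) : Set (MvPolynomial (Fin n × ℕ) k) :=
  { P | ∀ f ∈ arcIdeal k n, diffApply f P = 0 }

/-- The exponential power series `e^{ξ t} = ∑_j ξ^j t^j / j!`. -/
def expPS {k : Type*} [Field k] (ξ : k) : PowerSeries k :=
  PowerSeries.mk fun j => ξ ^ j / (j.factorial : k)

/-! ### Auxiliary lemmas -/

section DiffApplyAux

variable {k : Type*} [CommSemiring k] {σ : Type*}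

open Classical in
lemma diffApply_eq_sum_subset (f P : MvPolynomial σ k) {T : Finset ((σ →₀ ℕ))}
    (hT : f.support ⊆ T) :
    diffApply f P = ∑ d ∈ T, ∑ e ∈ P.support,
      if d ≤ e then
        monomial (e - d)
          (f.coeff d * P.coeff e * ∏ i ∈ d.support, ((e i).descFactorial (d i) : k))
      else 0 := by
  rw [diffApply]
  refine Finset.sum_subset hT fun d _ hd => ?_
  rw [MvPolynomial.notMem_support_iff] at hd
  refine Finset.sum_eq_zero fun e _ => ?_
  simp [hd]

lemma diffApply_zero (P : MvPolynomial σ k) : diffApply (0 : MvPolynomial σ k) P = 0 := by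
  simp [diffApply]

open Classical in
lemma diffApply_add (f g P : MvPolynomial σ k) :
    diffApply (f + g) P = diffApply f P + diffApply g P := by
  classical
  set T : Finset (σ →₀ ℕ) := f.support ∪ g.support ∪ (f + g).support with hT
  have h1 : (f + g).support ⊆ T := by intro x hx; exact Finset.mem_union_right _ hx
  have h2 : f.support ⊆ T := by
    intro x hx; exact Finset.mem_union_left _ (Finset.mem_union_left _ hx)
  have h3 : g.support ⊆ T := by
    intro x hx; exact Finset.mem_union_left _ (Finset.mem_union_right _ hx)
  rw [diffApply_eq_sum_subset (f + g) P h1, diffApply_eq_sum_subset f P h2,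
    diffApply_eq_sum_subset g P h3, ← Finset.sum_add_distrib]
  refine Finset.sum_congr rfl fun d _ => ?_
  rw [← Finset.sum_add_distrib]
  refine Finset.sum_congr rfl fun e _ => ?_
  split_ifs
  · rw [MvPolynomial.coeff_add, add_mul, add_mul, map_add]
  · simp

lemma diffApply_sum {ι : Type*} (T : Finset ι) (f : ι → MvPolynomial σ k)
    (P : MvPolynomial σ k) :
    diffApply (∑ s ∈ T, f s) P = ∑ s ∈ T, diffApply (f s) P := by
  classical
  induction T using Finset.cons_induction with
  | empty => simp [diffApply_zero]
  | cons a T ha ih => rw [Finset.sum_cons, Finset.sum_cons, diffApply_add, ih]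

lemma pderiv_pderiv_eq (v w : σ) (P : MvPolynomial σ k) :
    pderiv v (pderiv w P) = ∑ e ∈ P.support,
      monomial (e - Finsupp.single w 1 - Finsupp.single v 1)
        ((P.coeff e * e w) * ((e - Finsupp.single w 1 : σ →₀ ℕ) v)) := by
  conv_lhs => rw [P.as_sum]
  rw [map_sum, map_sum]
  exact Finset.sum_congr rfl fun e _ => by rw [pderiv_monomial, pderiv_monomial]

open Classical in
lemma diffApply_X_mul_X [Nontrivial k] (v w : σ) (P : MvPolynomial σ k) :
    diffApply (X v * X w) P = pderiv v (pderiv w P) := by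
  classical
  have hX : (X v * X w : MvPolynomial σ k)
      = monomial (Finsupp.single v 1 + Finsupp.single w 1) 1 := by
    rw [X, X, monomial_mul, one_mul]
  rw [hX, pderiv_pderiv_eq, diffApply, support_monomial, if_neg (one_ne_zero),
    Finset.sum_singleton]
  refine Finset.sum_congr rfl fun e _ => ?_
  rw [coeff_monomial, if_pos rfl, one_mul]
  by_cases hvw : v = w
  · subst hvw
    have h2 : Finsupp.single v 1 + Finsupp.single v 1 = Finsupp.single v 2 := by
      rw [← Finsupp.single_add]
    rw [h2]
    have h3 : ((e - Finsupp.single v 1 : σ →₀ ℕ) v) = e v - 1 := by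
      simp [Finsupp.tsub_apply]
    by_cases hle : Finsupp.single v 2 ≤ e
    · rw [if_pos hle]
      have hev : 2 ≤ e v := Finsupp.single_le_iff.mp hle
      have hsupp : (Finsupp.single v 2).support = {v} :=
        Finsupp.support_single_ne_zero _ (by norm_num)
      have hexp : e - Finsupp.single v 2 = e - Finsupp.single v 1 - Finsupp.single v 1 := by
        rw [← h2, tsub_add_eq_tsub_tsub]
      rw [hexp, hsupp, Finset.prod_singleton, Finsupp.single_apply, if_pos rfl]
      congr 1
      rw [h3]
      have h4 : (e v).descFactorial 2 = e v * (e v - 1) := by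
        simp [Nat.descFactorial, Nat.mul_comm]
      rw [h4]
      push_cast [Nat.cast_sub (by omega : 1 ≤ e v)]
      ring
    · rw [if_neg hle]
      have hev : e v < 2 := by
        by_contra h; exact hle (Finsupp.single_le_iff.mpr (by omega))
      rw [h3]
      have : e v = 0 ∨ e v = 1 := by omega
      rcases this with h | h <;> rw [h] <;> simp
  · -- v ≠ w
    have hwv : ¬ w = v := fun h => hvw h.symm
    have hsupp : (Finsupp.single v 1 + Finsupp.single w 1).support = {v} ∪ {w} := by
      rw [Finsupp.support_add_eq, Finsupp.support_single_ne_zero _ one_ne_zero,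
        Finsupp.support_single_ne_zero _ one_ne_zero]
      rw [Finsupp.support_single_ne_zero _ one_ne_zero,
        Finsupp.support_single_ne_zero _ one_ne_zero]
      exact Finset.disjoint_singleton.mpr hvw
    have hsw : ((e - Finsupp.single w 1 : σ →₀ ℕ) v) = e v := by
      simp [Finsupp.tsub_apply, Finsupp.single_apply, hwv]
    by_cases hle : Finsupp.single v 1 + Finsupp.single w 1 ≤ e
    · rw [if_pos hle]
      have hexp : e - (Finsupp.single v 1 + Finsupp.single w 1)
          = e - Finsupp.single w 1 - Finsupp.single v 1 := by
        rw [add_comm, tsub_add_eq_tsub_tsub]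
      rw [hexp, hsupp, Finset.prod_union (Finset.disjoint_singleton.mpr hvw),
        Finset.prod_singleton, Finset.prod_singleton]
      rw [hsw]
      simp only [Finsupp.add_apply, Finsupp.single_apply, if_pos rfl, if_neg hvw,
        if_neg hwv]
      norm_num
      ring_nf
    · rw [if_neg hle]
      have : e v = 0 ∨ e w = 0 := by
        by_contra h
        push_neg at h
        refine hle fun a => ?_
        rw [Finsupp.add_apply, Finsupp.single_apply, Finsupp.single_apply]
        rcases eq_or_ne v a with rfl | hva
        · simp [hvw, hwv]; omega
        · rcases eq_or_ne w a with rfl | hwa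
          · simp [hva]; omega
          · simp [hva, hwa]
      rcases this with h | h <;> simp [hsw, h]

end DiffApplyAux

section FSAux

variable {k : Type*} [CommSemiring k] {σ : Type*}

/-- The "directional derivative" operator `∑_{v ∈ S} q v • ∂_v`. -/
def FS (q : σ → k) (S : Finset σ) (P : MvPolynomial σ k) : MvPolynomial σ k :=
  ∑ v ∈ S, q v • pderiv v P

lemma FS_add (q : σ → k) (S : Finset σ) (P₁ P₂ : MvPolynomial σ k) :
    FS q S (P₁ + P₂) = FS q S P₁ + FS q S P₂ := by
  simp [FS, smul_add, Finset.sum_add_distrib]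

lemma vars_pderiv_subset [DecidableEq σ] (w : σ) (P : MvPolynomial σ k) :
    (pderiv w P).vars ⊆ P.vars := by
  intro a ha
  have h1 : pderiv w P
      = ∑ e ∈ P.support, monomial (e - Finsupp.single w 1) (P.coeff e * e w) := by
    conv_lhs => rw [P.as_sum]
    rw [map_sum]
    exact Finset.sum_congr rfl fun e _ => pderiv_monomial
  rw [h1] at ha
  obtain ⟨e, he, ha⟩ := Finset.mem_biUnion.mp (vars_sum_subset _ _ ha)
  by_cases hc : (P.coeff e * (e w : k)) = 0
  · rw [hc] at ha; simp at ha
  · rw [vars_monomial hc] at ha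
    have h2 : a ∈ e.support := by
      rw [Finsupp.mem_support_iff] at ha ⊢
      intro h0
      exact ha (by simp [Finsupp.tsub_apply, h0])
    exact (mem_vars a).mpr ⟨e, he, h2⟩

lemma FS_congr_subset [DecidableEq σ] (q : σ → k) {S S' : Finset σ} (P : MvPolynomial σ k)
    (h : P.vars ⊆ S) (hSS : S ⊆ S') : FS q S' P = FS q S P := by
  refine (Finset.sum_subset hSS fun v _ hv => ?_).symm
  rw [pderiv_eq_zero_of_notMem_vars (fun hm => hv (h hm)), smul_zero]

lemma vars_FS_subset [DecidableEq σ] (q : σ → k) (S : Finset σ) (P : MvPolynomial σ k) :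
    (FS q S P).vars ⊆ P.vars := by
  intro a ha
  obtain ⟨v, _, ha⟩ := Finset.mem_biUnion.mp (vars_sum_subset _ _ ha)
  have h1 : (q v • pderiv v P).vars ⊆ (pderiv v P).vars := by
    rw [smul_eq_C_mul]
    refine (vars_mul _ _).trans ?_
    rw [vars_C]
    simp
  exact vars_pderiv_subset v P (h1 ha)

lemma pderiv_psi {τ : Type*} [Fintype τ] [DecidableEq τ] (c : τ → σ → k) (m : τ) (v : σ) :
    pderiv m (∑ m' : τ, C (c m' v) * X m' : MvPolynomial τ k) = C (c m v) := by
  rw [map_sum, Finset.sum_eq_single m]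
  · rw [pderiv_C_mul, pderiv_X_self, mul_one]
  · intro b _ hb
    rw [pderiv_C_mul, pderiv_X_of_ne hb, mul_zero]
  · intro h; exact absurd (Finset.mem_univ m) h

lemma FS_mul_X [DecidableEq σ] (q : σ → k) (S : Finset σ) (P : MvPolynomial σ k) (v : σ)
    (hv : v ∈ S) : FS q S (P * X v) = FS q S P * X v + q v • P := by
  unfold FS
  simp only [pderiv_mul, smul_add, Finset.sum_add_distrib]
  congr 1
  · rw [Finset.sum_mul]
    exact Finset.sum_congr rfl fun w _ => (smul_mul_assoc _ _ _).symm
  · rw [Finset.sum_eq_single v]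
    · rw [pderiv_X_self, mul_one]
    · intro b _ hb
      rw [pderiv_X_of_ne (fun h => hb h.symm), mul_zero, smul_zero]
    · intro h; exact absurd hv h

/-- Chain rule for the linear substitution `x_v ↦ ∑ m' c m' v • y_{m'}`. -/
lemma chain_rule [DecidableEq σ] {τ : Type*} [Fintype τ] [DecidableEq τ] (c : τ → σ → k)
    (m : τ) (P : MvPolynomial σ k) (S : Finset σ) (hS : P.vars ⊆ S) :
    pderiv m (aeval (fun v => ∑ m' : τ, C (c m' v) * X m' : σ → MvPolynomial τ k) P)
      = aeval (fun v => ∑ m' : τ, C (c m' v) * X m' : σ → MvPolynomial τ k)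
          (FS (c m) S P) := by
  set ψ : σ → MvPolynomial τ k := fun v => ∑ m' : τ, C (c m' v) * X m' with hψ
  induction P using MvPolynomial.induction_on generalizing S with
  | C a => simp [FS, pderiv_C]
  | add p q ihp ihq =>
      set S' := S ∪ p.vars ∪ q.vars with hS'
      have hSsub : S ⊆ S' := by
        intro x hx; exact Finset.mem_union_left _ (Finset.mem_union_left _ hx)
      have hp : p.vars ⊆ S' := by
        intro x hx; exact Finset.mem_union_left _ (Finset.mem_union_right _ hx)
      have hq : q.vars ⊆ S' := fun x hx => Finset.mem_union_right _ hx
      rw [map_add, map_add, ihp S' hp, ihq S' hq, ← map_add, ← FS_add,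
        FS_congr_subset _ _ hS hSsub]
  | mul_X p v ihp =>
      set S' := S ∪ p.vars ∪ {v} with hS'
      have hSsub : S ⊆ S' := by
        intro x hx; exact Finset.mem_union_left _ (Finset.mem_union_left _ hx)
      have hp : p.vars ⊆ S' := by
        intro x hx; exact Finset.mem_union_left _ (Finset.mem_union_right _ hx)
      have hv : v ∈ S' := Finset.mem_union_right _ (Finset.mem_singleton_self v)
      have hpd : pderiv m (ψ v) = C (c m v) := pderiv_psi c m v
      conv_lhs => rw [map_mul, aeval_X]
      rw [pderiv_mul, ihp S' hp, hpd]
      conv_rhs => rw [← FS_congr_subset (c m) (p * X v) hS hSsub, FS_mul_X _ _ _ _ hv,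
        map_add, map_smul, map_mul, aeval_X]
      rw [smul_eq_C_mul]
      ring

lemma FS_FS (q : σ → k) (S : Finset σ) (P : MvPolynomial σ k) :
    FS q S (FS q S P) = ∑ v ∈ S, ∑ w ∈ S, (q v * q w) • pderiv v (pderiv w P) := by
  simp only [FS, map_sum, Derivation.map_smul, Finset.smul_sum, smul_smul]

end FSAux

section CoeffAux

variable {k : Type*} [CommSemiring k] {σ : Type*}

lemma my_coeff_pderiv [DecidableEq σ] (m : σ) (R : MvPolynomial σ k) (u : σ →₀ ℕ) :
    coeff u (pderiv m R) = ((u m + 1 : ℕ) : k) * coeff (u + Finsupp.single m 1) R := by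
  have h1 : pderiv m R
      = ∑ e ∈ R.support, monomial (e - Finsupp.single m 1) (R.coeff e * e m) := by
    conv_lhs => rw [R.as_sum]
    rw [map_sum]
    exact Finset.sum_congr rfl fun e _ => pderiv_monomial
  rw [h1]
  conv_rhs => rw [R.as_sum]
  rw [coeff_sum, coeff_sum, Finset.mul_sum]
  refine Finset.sum_congr rfl fun e _ => ?_
  rw [coeff_monomial, coeff_monomial]
  by_cases he : e = u + Finsupp.single m 1
  · subst he
    rw [if_pos rfl, if_pos (add_tsub_cancel_right _ _)]
    have h2 : ((u + Finsupp.single m 1 : σ →₀ ℕ)) m = u m + 1 := by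
      simp
    rw [h2]
    push_cast
    ring
  · rw [if_neg he, mul_zero]
    by_cases h2 : e - Finsupp.single m 1 = u
    · rw [if_pos h2]
      have h3 : e m = 0 := by
        by_contra h4
        have h5 : Finsupp.single m 1 ≤ e := Finsupp.single_le_iff.mpr (by omega)
        exact he (by rw [← h2, tsub_add_cancel_of_le h5])
      rw [h3]
      simp
    · rw [if_neg h2]

lemma sum_box {M : Type*} [AddCommMonoid M] (L : ℕ) (F : ℕ → ℕ → M)
    (hF : ∀ s r, L ≤ s + r → F s r = 0) :
    (∑ s ∈ Finset.range L, ∑ r ∈ Finset.range L, F s r)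
      = ∑ l ∈ Finset.range L, ∑ s ∈ Finset.range (l + 1), F s (l - s) := by
  rw [← Finset.sum_product']
  rw [show (∑ l ∈ Finset.range L, ∑ s ∈ Finset.range (l + 1), F s (l - s))
      = ∑ x ∈ (Finset.range L).sigma (fun l => Finset.range (l + 1)), F x.2 (x.1 - x.2)
    from (Finset.sum_sigma (Finset.range L) (fun l => Finset.range (l + 1))
      (fun x => F x.2 (x.1 - x.2))).symm]
  rw [show (∑ p ∈ Finset.range L ×ˢ Finset.range L, F p.1 p.2)
      = ∑ p ∈ (Finset.range L ×ˢ Finset.range L).filter (fun p => p.1 + p.2 < L), F p.1 p.2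
    from (Finset.sum_subset (Finset.filter_subset _ _) fun p hp hnp => by
      refine hF p.1 p.2 ?_
      simp only [Finset.mem_filter, hp, true_and, not_lt] at hnp
      exact hnp).symm]
  refine Finset.sum_nbij' (fun p => ⟨p.1 + p.2, p.1⟩) (fun x => (x.2, x.1 - x.2))
    ?_ ?_ ?_ ?_ ?_
  · rintro ⟨s, r⟩ hp
    simp only [Finset.mem_filter, Finset.mem_product, Finset.mem_range] at hp
    simp only [Finset.mem_sigma, Finset.mem_range]
    omega
  · rintro ⟨l, s⟩ hx
    simp only [Finset.mem_sigma, Finset.mem_range] at hx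
    simp only [Finset.mem_filter, Finset.mem_product, Finset.mem_range]
    omega
  · rintro ⟨s, r⟩ _
    simp
  · rintro ⟨l, s⟩ hx
    simp only [Finset.mem_sigma, Finset.mem_range] at hx
    have : s + (l - s) = l := by omega
    simp [this]
  · rintro ⟨s, r⟩ _
    simp

lemma box_smul_vanish {M : Type*} [AddCommMonoid M] [Module k M] (a c : k) (N : ℕ)
    (G : ℕ → ℕ → M) (h1 : ∀ l : ℕ, (∑ s ∈ Finset.range (l + 1), G s (l - s)) = 0)
    (h2 : ∀ s r, N ≤ s ∨ N ≤ r → G s r = 0) :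
    (∑ s ∈ Finset.range N, ∑ r ∈ Finset.range N, (a * c ^ (s + r)) • G s r) = 0 := by
  have hzero : ∀ s r : ℕ, N ≤ s ∨ N ≤ r → (a * c ^ (s + r)) • G s r = 0 := fun s r h => by
    rw [h2 s r h, smul_zero]
  have hinner : ∀ s : ℕ, (∑ r ∈ Finset.range N, (a * c ^ (s + r)) • G s r)
      = ∑ r ∈ Finset.range (2 * N), (a * c ^ (s + r)) • G s r := fun s =>
    Finset.sum_subset (Finset.range_subset_range.mpr (by omega)) fun r _ hr =>
      hzero s r (Or.inr (le_of_not_gt fun hlt => hr (Finset.mem_range.mpr hlt)))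
  have houter : (∑ s ∈ Finset.range N, ∑ r ∈ Finset.range (2 * N), (a * c ^ (s + r)) • G s r)
      = ∑ s ∈ Finset.range (2 * N), ∑ r ∈ Finset.range (2 * N), (a * c ^ (s + r)) • G s r :=
    Finset.sum_subset (Finset.range_subset_range.mpr (by omega)) fun s _ hs =>
      Finset.sum_eq_zero fun r _ =>
        hzero s r (Or.inl (le_of_not_gt fun hlt => hs (Finset.mem_range.mpr hlt)))
  calc (∑ s ∈ Finset.range N, ∑ r ∈ Finset.range N, (a * c ^ (s + r)) • G s r)
      = ∑ s ∈ Finset.range N, ∑ r ∈ Finset.range (2 * N), (a * c ^ (s + r)) • G s r :=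
        Finset.sum_congr rfl fun s _ => hinner s
    _ = ∑ s ∈ Finset.range (2 * N), ∑ r ∈ Finset.range (2 * N), (a * c ^ (s + r)) • G s r :=
        houter
    _ = ∑ l ∈ Finset.range (2 * N), ∑ s ∈ Finset.range (l + 1),
          (a * c ^ (s + (l - s))) • G s (l - s) :=
        sum_box (2 * N) _ (fun s r h => hzero s r (by omega))
    _ = 0 := by
        refine Finset.sum_eq_zero fun l _ => ?_
        have hcongr : ∀ s ∈ Finset.range (l + 1),
            (a * c ^ (s + (l - s))) • G s (l - s) = (a * c ^ l) • G s (l - s) := fun s hs => by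
          rw [Nat.add_sub_cancel' (Nat.lt_succ_iff.mp (Finset.mem_range.mp hs))]
        rw [Finset.sum_congr rfl hcongr, ← Finset.smul_sum, h1 l, smul_zero]

end CoeffAux

/-- a homogeneous element of degree `d+1` of the inverse system of the arc
ideal vanishes after substituting `x_j^(i) ↦` the `i`-th derivative of the `j`-th entry of
`∑_{m=1}^d α_m e^{ξ_m t}`, i.e. `x_j^(i) ↦ ∑_m α_{m,j} ξ_m^i e^{ξ_m t}`. -/
theorem stmt5 {k : Type*} [Field k] [CharZero k] (n d : ℕ)
    (P : MvPolynomial (Fin n × ℕ) k)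
    (hP : P ∈ invSys k n) (hhom : P.IsHomogeneous (d + 1))
    (ξ : Fin d → k) (α : Fin d → Fin n → k) :
    aeval (fun v : Fin n × ℕ =>
      ∑ m : Fin d, PowerSeries.C (α m v.1 * ξ m ^ v.2) * expPS (ξ m)) P = 0 := by
  classical
  set q : Fin d → (Fin n × ℕ) → k := fun m v => α m v.1 * ξ m ^ v.2 with hq
  set ψ : (Fin n × ℕ) → MvPolynomial (Fin d) k :=
    fun v => ∑ m' : Fin d, C (q m' v) * X m' with hψ
  set N : ℕ := P.vars.sup (fun v => v.2) + 1 with hN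
  set S : Finset (Fin n × ℕ) := Finset.univ ×ˢ Finset.range N with hS
  have hbound : ∀ v ∈ P.vars, v.2 < N := fun v hv =>
    Nat.lt_succ_of_le (Finset.le_sup (f := fun v : Fin n × ℕ => v.2) hv)
  have hvarsS : P.vars ⊆ S := fun v hv => by
    rw [hS, Finset.mem_product]
    exact ⟨Finset.mem_univ _, Finset.mem_range.mpr (hbound v hv)⟩
  -- the generators of the arc ideal annihilate `P`
  have hg0 : ∀ (i j : Fin n) (l : ℕ),
      (∑ s ∈ Finset.range (l + 1),
        pderiv ((i, s) : Fin n × ℕ) (pderiv ((j, l - s) : Fin n × ℕ) P)) = 0 := by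
    intro i j l
    have hmem : (∑ s ∈ Finset.range (l + 1),
        X ((i, s) : Fin n × ℕ) * X (j, l - s) : MvPolynomial (Fin n × ℕ) k)
        ∈ arcIdeal k n := Ideal.subset_span ⟨i, j, l, rfl⟩
    have h0 := hP _ hmem
    rw [diffApply_sum] at h0
    rw [← h0]
    exact Finset.sum_congr rfl fun s _ => (diffApply_X_mul_X _ _ _).symm
  -- second order vanishing for each exponential direction
  have hpd2 : ∀ (i j : Fin n) (s r : ℕ), N ≤ s ∨ N ≤ r →
      pderiv ((i, s) : Fin n × ℕ) (pderiv ((j, r) : Fin n × ℕ) P) = 0 := by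
    intro i j s r h
    rcases h with h | h
    · refine pderiv_eq_zero_of_notMem_vars fun hm => ?_
      have := hbound _ (vars_pderiv_subset _ _ hm)
      omega
    · rw [pderiv_eq_zero_of_notMem_vars (fun hm => by have := hbound _ hm; omega : 
        ((j, r) : Fin n × ℕ) ∉ P.vars), map_zero]
  have hFS2 : ∀ m : Fin d, FS (q m) S (FS (q m) S P) = 0 := by
    intro m
    rw [FS_FS, hS]
    rw [Finset.sum_product]
    simp only [Finset.sum_product]
    refine Finset.sum_eq_zero fun i _ => ?_
    rw [Finset.sum_comm]
    refine Finset.sum_eq_zero fun j _ => ?_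
    have hscalar : ∀ s r : ℕ, q m (i, s) * q m (j, r) = α m i * α m j * ξ m ^ (s + r) := by
      intro s r
      rw [hq]
      simp only [pow_add]
      ring
    have hstep : (∑ s ∈ Finset.range N, ∑ r ∈ Finset.range N,
        (q m (i, s) * q m (j, r)) • pderiv ((i, s) : Fin n × ℕ) (pderiv ((j, r) : Fin n × ℕ) P))
        = ∑ s ∈ Finset.range N, ∑ r ∈ Finset.range N, (α m i * α m j * ξ m ^ (s + r)) •
            pderiv ((i, s) : Fin n × ℕ) (pderiv ((j, r) : Fin n × ℕ) P) :=
      Finset.sum_congr rfl fun s _ => Finset.sum_congr rfl fun r _ => by rw [hscalar]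
    rw [hstep]
    exact box_smul_vanish (α m i * α m j) (ξ m) N _ (hg0 i j) (hpd2 i j)
  -- hence the substituted polynomial `Q` is "multilinear"
  have h2Q : ∀ m : Fin d, pderiv m (pderiv m (aeval ψ P)) = 0 := by
    intro m
    have hc1 := chain_rule q m P S hvarsS
    have hvars2 : (FS (q m) S P).vars ⊆ S := (vars_FS_subset _ _ _).trans hvarsS
    have hc2 := chain_rule q m (FS (q m) S P) S hvars2
    rw [← hψ] at hc1 hc2
    rw [hc1, hc2, hFS2 m, map_zero]
  -- `Q` is homogeneous of degree `d + 1`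
  have hψdeg : ∀ v : Fin n × ℕ, (ψ v).IsHomogeneous 1 := fun v => by
    rw [hψ]
    exact IsHomogeneous.sum Finset.univ _ 1 fun m' _ => isHomogeneous_C_mul_X _ _
  have hQhom : (aeval ψ P).IsHomogeneous (d + 1) := by
    have := hhom.aeval ψ hψdeg
    simpa using this
  -- `Q = 0`
  have hQ0 : aeval ψ P = 0 := by
    refine MvPolynomial.ext _ _ fun u => ?_
    rw [coeff_zero]
    by_cases hdeg : u.degree = d + 1
    · obtain ⟨m, hm⟩ : ∃ m : Fin d, 2 ≤ u m := by
        by_contra hcon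
        push_neg at hcon
        have hle : u.degree ≤ d := by
          have hdef : u.degree = ∑ a ∈ u.support, u a := rfl
          rw [hdef]
          calc ∑ a ∈ u.support, u a ≤ ∑ _a ∈ u.support, 1 :=
                Finset.sum_le_sum fun a _ => by have := hcon a; omega
            _ = u.support.card := by simp
            _ ≤ (Finset.univ : Finset (Fin d)).card :=
                Finset.card_le_card (Finset.subset_univ _)
            _ = d := by simp
        omega
      set w : Fin d →₀ ℕ := u - Finsupp.single m 2 with hw
      have hle2 : Finsupp.single m 2 ≤ u := Finsupp.single_le_iff.mpr hm
      have hu : w + Finsupp.single m 1 + Finsupp.single m 1 = u := by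
        rw [add_assoc, ← Finsupp.single_add, hw]
        norm_num
        exact tsub_add_cancel_of_le hle2
      have h0 : coeff w (pderiv m (pderiv m (aeval ψ P))) = 0 := by
        rw [h2Q m, coeff_zero]
      rw [my_coeff_pderiv, my_coeff_pderiv, hu] at h0
      have c1 : ((w m + 1 : ℕ) : k) ≠ 0 := Nat.cast_ne_zero.mpr (Nat.succ_ne_zero _)
      have c2 : ((((w + Finsupp.single m 1 : Fin d →₀ ℕ)) m + 1 : ℕ) : k) ≠ 0 :=
        Nat.cast_ne_zero.mpr (Nat.succ_ne_zero _)
      rcases mul_eq_zero.mp h0 with h | h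
      · exact absurd h c1
      rcases mul_eq_zero.mp h with h' | h'
      · exact absurd h' c2
      · exact h'
    · exact hQhom.coeff_eq_zero hdeg
  -- conclude by composing the two substitutions
  have h3 : (fun v : Fin n × ℕ =>
        aeval (fun m : Fin d => expPS (ξ m)) (ψ v))
      = fun v : Fin n × ℕ =>
        ∑ m : Fin d, PowerSeries.C (α m v.1 * ξ m ^ v.2) * expPS (ξ m) := by
    funext v
    rw [hψ]
    rw [map_sum]
    refine Finset.sum_congr rfl fun m' _ => ?_
    rw [map_mul, aeval_X, aeval_C]
    rw [show (algebraMap k (PowerSeries k)) (q m' v)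
        = PowerSeries.C (α m' v.1 * ξ m' ^ v.2) from by
      rw [PowerSeries.algebraMap_apply]; simp [hq]]
  have h1 := MvPolynomial.comp_aeval
    (φ := (aeval (fun m : Fin d => expPS (ξ m)) : MvPolynomial (Fin d) k →ₐ[k] PowerSeries k))
    (f := ψ)
  have h2 := DFunLike.congr_fun h1 P
  rw [AlgHom.comp_apply] at h2
  rw [← h3, ← h2, hQ0, map_zero]
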